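/- Let α₁, α₂, α₃ and Γ₁, Γ₂, Γ₃ be real numbers with κ ∉ {α₁, α₂, α₃}, and suppose Γ₁α₁ + Γ₂α₂ + Γ₃α₃ ≠ 0 and Γ₁ + Γ₂ + Γ₃ = 0. Then the equation ∑ᵢ Γᵢ(αᵢ − 1/(αᵢ − κ)) = 0 holds if and only if ∏ᵢ(κ − αᵢ) + κ + C = 0, where C = (Γ₁α₂α₃ + Γ₂α₃α₁ + Γ₃α₁α₂)/(Γ₁α₁ + Γ₂α₂ + Γ₃α₃). -/
import Mathlib

theorem kappa_equation_iff_cubic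
    (α₁ α₂ α₃ Γ₁ Γ₂ Γ₃ κ : ℝ)
    (h1 : κ ≠ α₁) (h2 : κ ≠ α₂) (h3 : κ ≠ α₃)
    (hΓα : Γ₁ * α₁ + Γ₂ * α₂ + Γ₃ * α₃ ≠ 0)
    (hΓ : Γ₁ + Γ₂ + Γ₃ = 0) :
    (Γ₁ * (α₁ - 1 / (α₁ - κ)) + Γ₂ * (α₂ - 1 / (α₂ - κ))
      + Γ₃ * (α₃ - 1 / (α₃ - κ)) = 0) ↔
    ((κ - α₁) * (κ - α₂) * (κ - α₃) + κ +
      (Γ₁ * α₂ * α₃ + Γ₂ * α₃ * α₁ + Γ₃ * α₁ * α₂) /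
        (Γ₁ * α₁ + Γ₂ * α₂ + Γ₃ * α₃) = 0) := by
  have d1 : α₁ - κ ≠ 0 := sub_ne_zero.mpr (Ne.symm h1)
  have d2 : α₂ - κ ≠ 0 := sub_ne_zero.mpr (Ne.symm h2)
  have d3 : α₃ - κ ≠ 0 := sub_ne_zero.mpr (Ne.symm h3)
  have hG3 : Γ₃ = -Γ₁ - Γ₂ := by linarith
  subst hG3
  field_simp
  constructor <;> intro h <;> linear_combination -h
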